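/- Let F be a free group on an arbitrary type of generators, and let H be a nontrivial commutative subgroup of F. Then there exists a unique subgroup M of F such that: M is infinite cyclic, H ≤ M, and M is maximal among infinite cyclic subgroups of F (i.e., every infinite cyclic subgroup of F containing M equals M). -/
import Mathlib


open FreeGroup

lemma list_cons_eq_append {γ : Type*} (x : γ) : ∀ (l : List γ), x :: l = l ++ [x] →
    l = List.replicate l.length x
  | [], _ => rfl
  | y :: t, h => by
    simp only [List.cons_append, List.cons.injEq] at h
    obtain ⟨rfl, h⟩ := h
    simpa [List.replicate_succ] using list_cons_eq_append x t h

lemma center_lemma {β : Type*} (z : FreeGroup β) (hz : z ≠ 1)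
    (hc : ∀ c : β, FreeGroup.of c * z = z * FreeGroup.of c) (a b : β) : a = b := by
  classical
  by_contra hab
  set w := z.toWord with hw
  have hwne : w ≠ [] := by simpa [hw, toWord_eq_nil_iff] using hz
  obtain ⟨⟨x₁, s₁⟩, rest, hcons⟩ := List.exists_cons_of_ne_nil hwne
  set c : β := if x₁ = a then b else a with hcdef
  have hcx : c ≠ x₁ := by
    by_cases h : x₁ = a
    · simp only [hcdef, h, if_pos]; exact fun hh => hab hh.symm
    · simp only [hcdef, if_neg h]; exact fun hh => h hh.symm
  have hred : reduce w = w := z.reduce_toWord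
  have hzmk : z = FreeGroup.mk w := (FreeGroup.mk_toWord).symm
  -- key computation: toWord (of c * z) = (c,true) :: w
  have hL : (FreeGroup.of c * z).toWord = (c, true) :: w := by
    rw [hzmk, FreeGroup.of, FreeGroup.mul_mk, FreeGroup.toWord_mk]
    rw [List.singleton_append, FreeGroup.reduce.cons]
    rw [hred, hcons]
    simp [hcx]
  -- and toWord (z * of c) determined via equality
  have heq : (FreeGroup.of c * z).toWord = (z * FreeGroup.of c).toWord := by rw [hc]
  -- now compute length / structure of toWord (z * of c) via inverse
  have hinv : ((z * FreeGroup.of c)⁻¹).toWord = invRev ((c, true) :: w) := by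
    rw [FreeGroup.toWord_inv, ← heq, hL]
  have hinv2 : ((z * FreeGroup.of c)⁻¹).toWord = reduce ((c, false) :: invRev w) := by
    rw [mul_inv_rev, hzmk, FreeGroup.inv_mk, FreeGroup.of]
    rw [show (FreeGroup.mk [(c, true)])⁻¹ = FreeGroup.mk [(c, false)] by
      rw [FreeGroup.inv_mk]; rfl]
    rw [FreeGroup.mul_mk, FreeGroup.toWord_mk, List.singleton_append]
  -- invRev w is reduced and nonempty
  have hredinv : reduce (invRev w) = invRev w := by
    rw [FreeGroup.reduce_invRev, hred]
  have hinvne : invRev w ≠ [] := by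
    intro h
    exact hwne (by simpa using congrArg invRev h)
  obtain ⟨⟨y₁, t₁⟩, rest', hcons'⟩ := List.exists_cons_of_ne_nil hinvne
  -- compute invRev ((c,true) :: w) = invRev w ++ [(c,false)]
  have hIR : invRev ((c, true) :: w) = invRev w ++ [(c, false)] := by
    simp [FreeGroup.invRev]
  rw [hinv2, hIR] at hinv
  -- reduce ((c,false) :: invRev w) via cons
  rw [FreeGroup.reduce.cons, hredinv, hcons'] at hinv
  dsimp only at hinv
  by_cases hcase : c = y₁ ∧ false = !t₁
  · rw [if_pos hcase] at hinv
    -- rest' = (y₁,t₁)::rest' ++ [(c,false)] is length contradiction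
    have := congrArg List.length hinv
    simp [hcons'] at this
    omega
  · rw [if_neg hcase] at hinv
    rw [← hcons'] at hinv
    -- (c,false) :: invRev w = invRev w ++ [(c,false)]
    have hrep := list_cons_eq_append _ _ hinv
    have hlen : (invRev w).length ≠ 0 := by
      simp [FreeGroup.invRev_length, hcons]
    obtain ⟨m, hm⟩ := Nat.exists_eq_succ_of_ne_zero hlen
    rw [hm] at hrep
    have hwrep : w = List.replicate (m + 1) (c, true) := by
      have := congrArg invRev hrep
      rw [FreeGroup.invRev_invRev] at this
      rw [this]
      simp [FreeGroup.invRev, List.map_replicate]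
    rw [hcons, List.replicate_succ] at hwrep
    have hx : (x₁, s₁) = (c, true) := (List.cons.injEq _ _ _ _ ▸ hwrep).1
    exact hcx (congrArg Prod.fst hx).symm

lemma freeGroup_comm_of_center {G : Type*} [Group G] [IsFreeGroup G] (z : G) (hz : z ≠ 1)
    (hc : ∀ g : G, g * z = z * g) (u v : G) : u * v = v * u := by
  classical
  let e : G ≃* FreeGroup (IsFreeGroup.Generators G) := IsFreeGroup.toFreeGroup G
  set β := IsFreeGroup.Generators G
  have hz' : e z ≠ 1 := by simpa using e.injective.ne hz
  have hc' : ∀ g' : FreeGroup β, g' * e z = e z * g' := by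
    intro g'
    have := hc (e.symm g')
    have := congrArg e this
    simpa using this
  have hsub : ∀ a b : β, a = b :=
    center_lemma (e z) hz' (fun c => hc' (FreeGroup.of c))
  -- get a generator a₀ from the nonempty word of e z
  have hwne : (e z).toWord ≠ [] := by simpa [FreeGroup.toWord_eq_nil_iff] using hz'
  obtain ⟨⟨a₀, s₀⟩, rest, hcons⟩ := List.exists_cons_of_ne_nil hwne
  -- every element of FreeGroup β is a power of of a₀
  have hall : ∀ x : FreeGroup β, ∃ n : ℤ, (FreeGroup.of a₀) ^ n = x := by
    intro x
    have htop : Subgroup.closure ({FreeGroup.of a₀} : Set (FreeGroup β)) = ⊤ := by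
      rw [← FreeGroup.closure_range_of β]
      congr 1
      apply Set.eq_of_subset_of_subset
      · exact Set.singleton_subset_iff.2 ⟨a₀, rfl⟩
      · rintro _ ⟨a, rfl⟩
        simp [hsub a a₀]
    rw [← Subgroup.mem_closure_singleton, htop]
    trivial
  obtain ⟨m, hm⟩ := hall (e u)
  obtain ⟨n, hn⟩ := hall (e v)
  have : e u * e v = e v * e u := by
    rw [← hm, ← hn]
    exact ((Commute.refl _).zpow_zpow m n)
  apply e.injective
  simpa using this

lemma subgroup_comm_of_center {α : Type*} (K : Subgroup (FreeGroup α)) (z : FreeGroup α)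
    (hzK : z ∈ K) (hz : z ≠ 1) (hc : ∀ g ∈ K, g * z = z * g)
    (u : FreeGroup α) (hu : u ∈ K) (v : FreeGroup α) (hv : v ∈ K) : u * v = v * u := by
  have := freeGroup_comm_of_center (G := K) ⟨z, hzK⟩
    (by simp [Subtype.ext_iff, hz]) 
    (fun g => Subtype.ext (hc g g.2)) ⟨u, hu⟩ ⟨v, hv⟩
  exact congrArg Subtype.val this

lemma comm_subgroup_infinite_cyclic {α : Type*} (K : Subgroup (FreeGroup α))
    (k : FreeGroup α) (hkK : k ∈ K) (hk : k ≠ 1)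
    (hcomm : ∀ u ∈ K, ∀ v ∈ K, u * v = v * u) :
    ∃ x : FreeGroup α, ¬ IsOfFinOrder x ∧ K = Subgroup.closure {x} := by
  classical
  let e : K ≃* FreeGroup (IsFreeGroup.Generators K) := IsFreeGroup.toFreeGroup K
  set β := IsFreeGroup.Generators K with hβ
  -- FreeGroup β is commutative
  have hc' : ∀ u v : FreeGroup β, u * v = v * u := by
    intro u v
    have := hcomm (e.symm u) (e.symm u).2 (e.symm v) (e.symm v).2
    have h2 : (e.symm u) * (e.symm v) = (e.symm v) * (e.symm u) := Subtype.ext this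
    have := congrArg e h2
    simpa using this
  have hk' : e ⟨k, hkK⟩ ≠ 1 := by
    simp only [ne_eq, EmbeddingLike.map_eq_one_iff, Subtype.ext_iff]
    exact hk
  have hsub : ∀ a b : β, a = b :=
    center_lemma (e ⟨k, hkK⟩) hk' (fun c => hc' _ _)
  have hwne : (e ⟨k, hkK⟩).toWord ≠ [] := by
    simpa [FreeGroup.toWord_eq_nil_iff] using hk'
  obtain ⟨⟨a₀, s₀⟩, rest, hcons⟩ := List.exists_cons_of_ne_nil hwne
  have hall : ∀ x : FreeGroup β, ∃ n : ℤ, (FreeGroup.of a₀) ^ n = x := by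
    intro x
    have htop : Subgroup.closure ({FreeGroup.of a₀} : Set (FreeGroup β)) = ⊤ := by
      rw [← FreeGroup.closure_range_of β]
      congr 1
      apply Set.eq_of_subset_of_subset
      · exact Set.singleton_subset_iff.2 ⟨a₀, rfl⟩
      · rintro _ ⟨a, rfl⟩
        simp [hsub a a₀]
    rw [← Subgroup.mem_closure_singleton, htop]
    trivial
  refine ⟨((e.symm (FreeGroup.of a₀) : K) : FreeGroup α), ?_, ?_⟩
  · -- infinite order
    rw [isOfFinOrder_iff_pow_eq_one]
    rintro ⟨n, hn, hpow⟩
    have h1 : (e.symm (FreeGroup.of a₀)) ^ n = (1 : K) := by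
      apply Subtype.ext
      push_cast
      exact hpow
    have h2 : (FreeGroup.of a₀ : FreeGroup β) ^ n = 1 := by
      have := congrArg e h1
      simpa using this
    have := congrArg FreeGroup.toWord h2
    rw [FreeGroup.toWord_of_pow, FreeGroup.toWord_one] at this
    simp at this
    omega
  · -- K = closure
    apply le_antisymm
    · intro g hg
      obtain ⟨n, hn⟩ := hall (e ⟨g, hg⟩)
      rw [Subgroup.mem_closure_singleton]
      refine ⟨n, ?_⟩
      have : (e.symm (FreeGroup.of a₀)) ^ n = ⟨g, hg⟩ := by
        apply e.injective
        simpa using hn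
      calc (↑(e.symm (FreeGroup.of a₀)) : FreeGroup α) ^ n
          = ((e.symm (FreeGroup.of a₀) ^ n : K) : FreeGroup α) := by push_cast; ring_nf
        _ = g := by rw [this]
    · rw [Subgroup.closure_le]
      exact Set.singleton_subset_iff.2 (e.symm (FreeGroup.of a₀)).2

lemma closure_comm_of_comm {G : Type*} [Group G] (s : Set G)
    (hs : ∀ x ∈ s, ∀ y ∈ s, x * y = y * x) :
    ∀ u ∈ Subgroup.closure s, ∀ v ∈ Subgroup.closure s, u * v = v * u := by
  intro u hu v hv
  have h1 : Subgroup.closure s ≤ Subgroup.centralizer s := by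
    rw [Subgroup.closure_le]
    intro x hx
    simp only [SetLike.mem_coe, Subgroup.mem_centralizer_iff]
    intro y hy
    exact hs y hy x hx
  have h2 : Subgroup.closure s ≤ Subgroup.centralizer {u} := by
    rw [Subgroup.closure_le]
    intro x hx
    simp only [SetLike.mem_coe, Subgroup.mem_centralizer_iff]
    rintro y rfl
    exact (Subgroup.mem_centralizer_iff.mp (h1 hu) x hx).symm
  have := h2 hv
  rw [Subgroup.mem_centralizer_iff] at this
  exact this u rfl
lemma centralizer_comm {α : Type*} (h : FreeGroup α) (hh : h ≠ 1) :
    ∀ u ∈ Subgroup.centralizer {h}, ∀ v ∈ Subgroup.centralizer {h}, u * v = v * u := by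
  intro u hu v hv
  have huh : u * h = h * u := (Subgroup.mem_centralizer_iff.mp hu h rfl).symm
  have hvh : v * h = h * v := (Subgroup.mem_centralizer_iff.mp hv h rfl).symm
  -- the subgroup generated by u and h is commutative, hence infinite cyclic
  have pair_comm : ∀ (w : FreeGroup α), w * h = h * w →
      ∀ x ∈ ({w, h} : Set (FreeGroup α)), ∀ y ∈ ({w, h} : Set (FreeGroup α)), x * y = y * x := by
    intro w hw x hx y hy
    rcases hx with rfl | rfl <;> rcases hy with rfl | rfl
    · rfl
    · exact hw
    · exact hw.symm
    · rfl
  have hmemh : ∀ w : FreeGroup α, h ∈ Subgroup.closure ({w, h} : Set (FreeGroup α)) :=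
    fun w => Subgroup.subset_closure (Set.mem_insert_iff.2 (Or.inr rfl))
  obtain ⟨p, -, hKu⟩ := comm_subgroup_infinite_cyclic
    (Subgroup.closure ({u, h} : Set (FreeGroup α))) h (hmemh u) hh
    (closure_comm_of_comm _ (pair_comm u huh))
  obtain ⟨q, -, hKv⟩ := comm_subgroup_infinite_cyclic
    (Subgroup.closure ({v, h} : Set (FreeGroup α))) h (hmemh v) hh
    (closure_comm_of_comm _ (pair_comm v hvh))
  obtain ⟨i, hi⟩ := Subgroup.mem_closure_singleton.mp
    (hKu ▸ Subgroup.subset_closure (Set.mem_insert _ _))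
  obtain ⟨j, hj⟩ := Subgroup.mem_closure_singleton.mp (hKu ▸ hmemh u)
  obtain ⟨k, hk⟩ := Subgroup.mem_closure_singleton.mp
    (hKv ▸ Subgroup.subset_closure (Set.mem_insert _ _))
  obtain ⟨l, hl⟩ := Subgroup.mem_closure_singleton.mp (hKv ▸ hmemh v)
  -- now p and q commute, since h = p^j = q^l is central in closure {p, q}
  set P := Subgroup.closure ({p, q} : Set (FreeGroup α)) with hP
  have hpP : p ∈ P := Subgroup.subset_closure (Set.mem_insert _ _)
  have hqP : q ∈ P := Subgroup.subset_closure (Set.mem_insert_iff.2 (Or.inr rfl))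
  have hhP : h ∈ P := hj ▸ zpow_mem hpP j
  have hcent : ∀ g ∈ P, g * h = h * g := by
    intro g hg
    have : P ≤ Subgroup.centralizer {h} := by
      rw [Subgroup.closure_le]
      rintro x (rfl | rfl) <;> simp only [SetLike.mem_coe, Subgroup.mem_centralizer_iff] <;>
        rintro y rfl
      · rw [← hj]; exact (((Commute.refl x).zpow_right j)).symm
      · rw [← hl]; exact (((Commute.refl x).zpow_right l)).symm
    exact (Subgroup.mem_centralizer_iff.mp (this hg) h rfl).symm
  have hpq : p * q = q * p := subgroup_comm_of_center P h hhP hh hcent p hpP q hqP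
  rw [← hi, ← hk]
  exact Commute.zpow_zpow hpq i k

/-- A subgroup is infinite cyclic if it is generated by a single element of infinite
order. -/
def IsInfiniteCyclic {G : Type*} [Group G] (M : Subgroup G) : Prop :=
  ∃ x : G, ¬ IsOfFinOrder x ∧ M = Subgroup.closure {x}

/-- For every nontrivial commutative subgroup `H` of a free group there is a unique
subgroup `M` which is infinite cyclic, contains `H`, and is maximal among infinite
cyclic subgroups. -/
theorem freeGroup_unique_maximal_infinite_cyclic {α : Type*}
    (H : Subgroup (FreeGroup α)) (hne : ∃ x ∈ H, x ≠ 1)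
    (hcomm : ∀ x ∈ H, ∀ y ∈ H, x * y = y * x) :
    ∃! M : Subgroup (FreeGroup α), IsInfiniteCyclic M ∧ H ≤ M ∧
      ∀ N : Subgroup (FreeGroup α), IsInfiniteCyclic N → M ≤ N → N = M := by
  obtain ⟨h, hhH, hh⟩ := hne
  set C := Subgroup.centralizer ({h} : Set (FreeGroup α)) with hC
  have hhC : h ∈ C := Subgroup.mem_centralizer_iff.mpr (by intro y hy; rw [Set.mem_singleton_iff] at hy; subst hy; rfl)
  have hHC : H ≤ C := by
    intro x hx
    exact Subgroup.mem_centralizer_iff.mpr (by intro y hy; rw [Set.mem_singleton_iff] at hy; subst hy; exact hcomm _ hhH x hx)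
  have hCcomm := centralizer_comm h hh
  have hic : IsInfiniteCyclic C := comm_subgroup_infinite_cyclic C h hhC hh hCcomm
  -- any commutative subgroup containing h is contained in C
  have key : ∀ N : Subgroup (FreeGroup α), h ∈ N →
      (∀ u ∈ N, ∀ v ∈ N, u * v = v * u) → N ≤ C := by
    intro N hhN hNcomm x hx
    exact Subgroup.mem_centralizer_iff.mpr (by intro y hy; rw [Set.mem_singleton_iff] at hy; subst hy; exact hNcomm _ hhN x hx)
  have cyclic_comm : ∀ N : Subgroup (FreeGroup α), IsInfiniteCyclic N →
      ∀ u ∈ N, ∀ v ∈ N, u * v = v * u := by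
    rintro N ⟨y, -, rfl⟩ u hu v hv
    obtain ⟨i, hi⟩ := Subgroup.mem_closure_singleton.mp hu
    obtain ⟨j, hj⟩ := Subgroup.mem_closure_singleton.mp hv
    rw [← hi, ← hj]
    exact Commute.zpow_zpow rfl i j
  have hmax : ∀ N : Subgroup (FreeGroup α), IsInfiniteCyclic N → C ≤ N → N = C := by
    intro N hN hCN
    exact le_antisymm (key N (hCN hhC) (cyclic_comm N hN)) hCN
  refine ⟨C, ⟨hic, hHC, hmax⟩, ?_⟩
  rintro M' ⟨hM'ic, hHM', hM'max⟩
  have hM'C : M' ≤ C := key M' (hHM' hhH) (cyclic_comm M' hM'ic)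
  exact (hM'max C hic hM'C).symm
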